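/- Let X be a proper metric space, U an open subset of X, and f : U → ℝ^k a continuous map. Suppose there is ε ∈ (0,1) such that for every p ∈ U and every unit vector ξ ∈ ℝ^k, there exist points q ∈ U arbitrarily close to p with q ≠ p and |(f(q) - f(p))/dist(p,q) - ξ| < ε. Then f is (1-ε)-open on U: for any x ∈ U and v ∈ ℝ^k such that the closed ball of radius (1-ε)⁻¹·|f(x) - v| around x is contained in U, there exists y ∈ U with f(y) = v and (1-ε)·dist(x,y) ≤ |f(x) - v|. -/

import Mathlib

open Metric Set

/-- the openness lemma for maps into ℝ^k on a proper metric space. -/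
theorem stmt0 {X : Type*} [MetricSpace X] [ProperSpace X] {k : ℕ}
    (U : Set X) (hU : IsOpen U) (f : X → EuclideanSpace ℝ (Fin k))
    (hf : ContinuousOn f U) (ε : ℝ) (hε0 : 0 < ε) (hε1 : ε < 1)
    (hdir : ∀ p ∈ U, ∀ ξ : EuclideanSpace ℝ (Fin k), ‖ξ‖ = 1 →
      ∀ η > (0:ℝ), ∃ q ∈ U, q ≠ p ∧ dist q p < η ∧
        ‖(dist p q)⁻¹ • (f q - f p) - ξ‖ < ε) :
    ∀ x ∈ U, ∀ v : EuclideanSpace ℝ (Fin k),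
      Metric.closedBall x ((1 - ε)⁻¹ * ‖f x - v‖) ⊆ U →
      ∃ y ∈ U, f y = v ∧ (1 - ε) * dist x y ≤ ‖f x - v‖ := by
  intro x hx v hball
  have hε1' : (0:ℝ) < 1 - ε := by linarith
  set r : ℝ := (1 - ε)⁻¹ * ‖f x - v‖ with hr
  have hr0 : 0 ≤ r := mul_nonneg (by positivity) (norm_nonneg _)
  have hK : IsCompact (closedBall x r) := isCompact_closedBall x r
  set g : X → ℝ := fun y => (1 - ε) * dist x y + ‖f y - v‖ with hg
  have hgc : ContinuousOn g (closedBall x r) := by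
    apply ContinuousOn.add
    · exact (continuous_const.mul (continuous_const.dist continuous_id)).continuousOn
    · exact ((hf.mono hball).sub continuousOn_const).norm
  set S : Set X := closedBall x r ∩ g ⁻¹' Iic ‖f x - v‖ with hS
  have hSsub : S ⊆ closedBall x r := inter_subset_left
  have hSclosed : IsClosed S :=
    hgc.preimage_isClosed_of_isClosed Metric.isClosed_closedBall isClosed_Iic
  have hSc : IsCompact S := hK.of_isClosed_subset hSclosed hSsub
  have hxS : x ∈ S := by
    constructor
    · exact mem_closedBall_self hr0
    · simp [hg, dist_self]
  obtain ⟨y, hyS, hymin⟩ := hSc.exists_isMinOn ⟨x, hxS⟩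
    (((hf.mono (hSsub.trans hball)).sub continuousOn_const).norm)
  have hyU : y ∈ U := hball (hSsub hyS)
  have hygS : g y ≤ ‖f x - v‖ := hyS.2
  have hfy : f y = v := by
    by_contra hne
    set δ : ℝ := ‖f y - v‖ with hδdef
    have hδ : 0 < δ := by
      rw [hδdef, norm_pos_iff]
      exact sub_ne_zero.mpr hne
    set ξ : EuclideanSpace ℝ (Fin k) := ‖v - f y‖⁻¹ • (v - f y) with hξdef
    have hvfy : ‖v - f y‖ = δ := by rw [hδdef, norm_sub_rev]
    have hξ : ‖ξ‖ = 1 := by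
      rw [hξdef, norm_smul, norm_inv, norm_norm, inv_mul_cancel₀]
      rw [hvfy]; exact hδ.ne'
    obtain ⟨q, hqU, hqy, hdq, hlt⟩ := hdir y hyU ξ hξ δ hδ
    set d : ℝ := dist y q with hddef
    have hd0 : 0 < d := by
      rw [hddef, dist_comm]
      exact dist_pos.mpr hqy
    have hdδ : d < δ := by rw [hddef, dist_comm]; exact hdq
    -- key estimate
    have hkey : ‖f q - f y - d • ξ‖ < ε * d := by
      have := hlt
      have h2 : ‖d • (d⁻¹ • (f q - f y) - ξ)‖ < d * ε := by
        rw [norm_smul, Real.norm_eq_abs, abs_of_pos hd0]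
        exact (mul_lt_mul_iff_right₀ hd0).mpr this
      rw [smul_sub, smul_inv_smul₀ hd0.ne'] at h2
      linarith [h2]
    have hfactor : f y - v + d • ξ = (1 - d / δ) • (f y - v) := by
      have : d • ξ = (d / δ) • (v - f y) := by
        rw [hξdef, smul_smul, hvfy, div_eq_mul_inv]
      rw [this, sub_smul, one_smul, smul_sub]
      module
    have hnorm2 : ‖f y - v + d • ξ‖ = δ - d := by
      rw [hfactor, norm_smul, Real.norm_eq_abs,
        abs_of_nonneg (by rw [sub_nonneg, div_le_one hδ]; exact hdδ.le : (0:ℝ) ≤ 1 - d / δ), ← hδdef]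
      field_simp
    have hfq : ‖f q - v‖ < ε * d + (δ - d) := by
      have : f q - v = (f q - f y - d • ξ) + (f y - v + d • ξ) := by abel
      calc ‖f q - v‖ ≤ ‖f q - f y - d • ξ‖ + ‖f y - v + d • ξ‖ := by
            rw [this]; exact norm_add_le _ _
        _ < ε * d + (δ - d) := by rw [hnorm2]; linarith [hkey]
    have hdistq : dist x q ≤ dist x y + d := by
      rw [hddef]; exact dist_triangle x y q
    have hgq : g q < ‖f x - v‖ := by
      have h1 : g q = (1 - ε) * dist x q + ‖f q - v‖ := rfl
      have h2 : (1 - ε) * dist x q ≤ (1 - ε) * (dist x y + d) :=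
        (mul_le_mul_iff_right₀ hε1').mpr hdistq
      have h3 : g y = (1 - ε) * dist x y + δ := by rw [hg, hδdef]
      nlinarith [hygS]
    have hqS : q ∈ S := by
      constructor
      · rw [mem_closedBall, dist_comm]
        have h0 : (1 - ε) * dist x q ≤ g q := by
          have := norm_nonneg (f q - v)
          simp only [hg]; linarith
        have h4 : (1 - ε) * dist x q ≤ ‖f x - v‖ := le_trans h0 hgq.le
        calc dist x q = (1 - ε)⁻¹ * ((1 - ε) * dist x q) := by field_simp
          _ ≤ (1 - ε)⁻¹ * ‖f x - v‖ :=
              mul_le_mul_of_nonneg_left h4 (by positivity)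
      · exact le_of_lt hgq
    have : δ ≤ ‖f q - v‖ := hymin hqS
    nlinarith
  refine ⟨y, hyU, hfy, ?_⟩
  have : g y = (1 - ε) * dist x y := by simp [hg, hfy]
  linarith [hygS, this.symm.le]
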